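/- Let Y and D be random variables with D taking values in {0, 1, ..., N̄}, P(D=d) > 0 for all such d, and Var(D) > 0. Define α₁ = Cov(Y, D)/Var(D). Then α₁ = ∑_{d=1}^{N̄} ω̃(d)·(E[Y|D=d] − E[Y|D=0])/d, where ω̃(d) = d·(d − E[D])·P(D=d)/Var(D), and these weights satisfy ∑_{d=1}^{N̄} ω̃(d) = 1, with ω̃(d) < 0 for 0 < d < E[D] and ω̃(d) > 0 for d > E[D]. -/

import Mathlib

open Finset

/- Probability of an event, conditional probability `P(A|B)`, and conditional
expectation `E[Y|A]` under a mass function `p` on a finite sample space. -/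

open Classical in
noncomputable def Pr {Ω : Type*} [Fintype Ω] (p : Ω → ℝ) (A : Ω → Prop) : ℝ :=
  ∑ ω, if A ω then p ω else 0

noncomputable def cPr {Ω : Type*} [Fintype Ω] (p : Ω → ℝ) (A B : Ω → Prop) : ℝ :=
  Pr p (fun ω => A ω ∧ B ω) / Pr p B

open Classical in
noncomputable def cexp {Ω : Type*} [Fintype Ω] (p : Ω → ℝ) (Y : Ω → ℝ) (A : Ω → Prop) : ℝ :=
  (∑ ω, if A ω then p ω * Y ω else 0) / Pr p A

/-- Expectation under the mass function `p`. -/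
noncomputable def Ex {Ω : Type*} [Fintype Ω] (p : Ω → ℝ) (X : Ω → ℝ) : ℝ :=
  ∑ ω, p ω * X ω

/-- Baseline-to-`d` decomposition of the regression slope: for `D` supported on
`{0,…,N}` with positive variance, `α₁ = Cov(Y,D)/Var(D)` equals
`∑_{d=1}^{N} ω̃(d)·(E[Y|D=d] − E[Y|D=0])/d` with
`ω̃(d) = d·(d − E[D])·P(D=d)/Var(D)`; the weights sum to one, are negative for
`0 < d < E[D]` and positive for `d > E[D]`. -/
theorem baseline_to_d_decomposition
    {Ω : Type*} [Fintype Ω]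
    (p : Ω → ℝ) (hp0 : ∀ ω, 0 ≤ p ω) (hp1 : ∑ ω, p ω = 1)
    (Y : Ω → ℝ) (D : Ω → ℕ) (N : ℕ) (hDN : ∀ ω, D ω ≤ N)
    (hpos : ∀ d ≤ N, 0 < Pr p (fun ω => D ω = d))
    (Var : ℝ)
    (hVarDef : Var = Ex p (fun ω => ((D ω : ℝ)) ^ 2) - (Ex p (fun ω => (D ω : ℝ))) ^ 2)
    (hVar : 0 < Var)
    (α₁ : ℝ)
    (hα : α₁ = (Ex p (fun ω => Y ω * (D ω : ℝ))
        - Ex p Y * Ex p (fun ω => (D ω : ℝ))) / Var)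
    (ωtil : ℕ → ℝ)
    (hωdef : ∀ d : ℕ, ωtil d =
      (d : ℝ) * ((d : ℝ) - Ex p (fun ω => (D ω : ℝ))) * Pr p (fun ω => D ω = d) / Var) :
    α₁ = ∑ d ∈ Finset.Icc 1 N,
          ωtil d * ((cexp p Y (fun ω => D ω = d) - cexp p Y (fun ω => D ω = 0)) / d) ∧
    ∑ d ∈ Finset.Icc 1 N, ωtil d = 1 ∧
    (∀ d ∈ Finset.Icc 1 N, (d : ℝ) < Ex p (fun ω => (D ω : ℝ)) → ωtil d < 0) ∧
    (∀ d ∈ Finset.Icc 1 N, Ex p (fun ω => (D ω : ℝ)) < (d : ℝ) → 0 < ωtil d) := by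
  classical
  set μ := Ex p (fun ω => (D ω : ℝ)) with hμ
  set P : ℕ → ℝ := fun d => Pr p (fun ω => D ω = d) with hPdef
  set S : ℕ → ℝ := fun d => ∑ ω, if D ω = d then p ω * Y ω else 0 with hSdef
  have key : ∀ g : ℕ → ℝ, ∀ Z : Ω → ℝ,
      ∑ d ∈ Finset.range (N+1), g d * (∑ ω, if D ω = d then p ω * Z ω else 0)
        = ∑ ω, p ω * Z ω * g (D ω) := by
    intro g Z
    simp_rw [Finset.mul_sum]
    rw [Finset.sum_comm]
    refine Finset.sum_congr rfl fun ω _ => ?_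
    rw [Finset.sum_eq_single (D ω)]
    · simp [mul_comm]
    · intro b _ hb
      rw [if_neg (fun h : D ω = b => hb h.symm), mul_zero]
    · intro h
      exact absurd (Finset.mem_range.2 (Nat.lt_succ_of_le (hDN ω))) h
  have keyS : ∀ g : ℕ → ℝ,
      ∑ d ∈ Finset.range (N+1), g d * S d = ∑ ω, p ω * Y ω * g (D ω) := by
    intro g
    simp only [hSdef]
    exact key g Y
  have hPrEq : ∀ d, Pr p (fun ω => D ω = d) = ∑ ω, if D ω = d then p ω else 0 := by
    intro d
    refine Finset.sum_congr rfl fun ω _ => ?_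
    congr
  have hP' : ∀ d, P d = ∑ ω, if D ω = d then p ω else 0 := by
    intro d; simp only [hPdef]; exact hPrEq d
  have keyP : ∀ g : ℕ → ℝ,
      ∑ d ∈ Finset.range (N+1), g d * P d = ∑ ω, p ω * g (D ω) := by
    intro g
    have h := key g (fun _ => 1)
    simp only [mul_one] at h
    simp only [hP']
    exact h
  have hPpos : ∀ d ≤ N, 0 < P d := by
    intro d hd
    simp only [hPdef]
    exact hpos d hd
  have hcexp : ∀ d, cexp p Y (fun ω => D ω = d) = S d / P d := by
    intro d
    simp only [hSdef, hPdef, cexp]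
    congr 1
    exact Finset.sum_congr rfl fun ω _ => by congr
  have hωdef' : ∀ d, ωtil d = (d:ℝ) * ((d:ℝ) - μ) * P d / Var := by
    intro d
    simp only [hPdef]
    exact hωdef d
  have hins : Finset.range (N+1) = insert 0 (Finset.Icc 1 N) := by
    ext x; simp only [Finset.mem_range, Finset.mem_insert, Finset.mem_Icc]; omega
  have hsplit : ∀ f : ℕ → ℝ,
      ∑ d ∈ Finset.range (N+1), f d = f 0 + ∑ d ∈ Finset.Icc 1 N, f d := by
    intro f
    rw [hins, Finset.sum_insert (by simp)]
  have hE1 : μ = ∑ ω, p ω * (D ω : ℝ) := hμ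
  have hA : ∑ d ∈ Finset.range (N+1), (((d:ℝ) - μ) * S d)
      = Ex p (fun ω => Y ω * (D ω : ℝ)) - Ex p Y * μ := by
    rw [keyS (fun d => (d:ℝ) - μ)]
    have h2 : Ex p (fun ω => Y ω * (D ω : ℝ)) = ∑ ω, p ω * (Y ω * (D ω : ℝ)) := rfl
    have h3 : Ex p Y = ∑ ω, p ω * Y ω := rfl
    rw [h2, h3, Finset.sum_mul, ← Finset.sum_sub_distrib]
    exact Finset.sum_congr rfl fun ω _ => by ring
  have hB : ∑ d ∈ Finset.range (N+1), (((d:ℝ) - μ) * P d) = 0 := by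
    rw [keyP (fun d => (d:ℝ) - μ)]
    have : ∑ ω, p ω * ((D ω:ℝ) - μ)
        = (∑ ω, p ω * (D ω:ℝ)) - (∑ ω, p ω) * μ := by
      rw [Finset.sum_mul, ← Finset.sum_sub_distrib]
      exact Finset.sum_congr rfl fun ω _ => by ring
    rw [this, hp1, ← hE1]; ring
  have hV : ∑ d ∈ Finset.range (N+1), ((d:ℝ) * ((d:ℝ) - μ) * P d) = Var := by
    rw [keyP (fun d => (d:ℝ) * ((d:ℝ) - μ)), hVarDef]
    have h2 : Ex p (fun ω => (D ω : ℝ)^2) = ∑ ω, p ω * (D ω : ℝ)^2 := rfl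
    have : ∑ ω, p ω * ((D ω:ℝ) * ((D ω:ℝ) - μ))
        = (∑ ω, p ω * (D ω:ℝ)^2) - (∑ ω, p ω * (D ω:ℝ)) * μ := by
      rw [Finset.sum_mul, ← Finset.sum_sub_distrib]
      exact Finset.sum_congr rfl fun ω _ => by ring
    rw [this, h2, ← hE1]; ring
  have hIccS : ∑ d ∈ Finset.Icc 1 N, (((d:ℝ) - μ) * S d)
      = (Ex p (fun ω => Y ω * (D ω : ℝ)) - Ex p Y * μ) + μ * S 0 := by
    have h := hsplit (fun d => ((d:ℝ) - μ) * S d)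
    rw [hA] at h
    simp only [Nat.cast_zero] at h
    linarith
  have hIccP : ∑ d ∈ Finset.Icc 1 N, (((d:ℝ) - μ) * P d) = μ * P 0 := by
    have h := hsplit (fun d => ((d:ℝ) - μ) * P d)
    rw [hB] at h
    simp only [Nat.cast_zero] at h
    linarith
  have hIccV : ∑ d ∈ Finset.Icc 1 N, ((d:ℝ) * ((d:ℝ) - μ) * P d) = Var := by
    have h := hsplit (fun d => (d:ℝ) * ((d:ℝ) - μ) * P d)
    rw [hV] at h
    simp only [Nat.cast_zero] at h
    linarith
  have hwsum : ∑ d ∈ Finset.Icc 1 N, ωtil d = 1 := by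
    have : ∑ d ∈ Finset.Icc 1 N, ωtil d
        = (∑ d ∈ Finset.Icc 1 N, ((d:ℝ) * ((d:ℝ) - μ) * P d)) / Var := by
      rw [Finset.sum_div]
      exact Finset.sum_congr rfl fun d _ => hωdef' d
    rw [this, hIccV, div_self hVar.ne']
  have hP0 : P 0 ≠ 0 := (hPpos 0 (Nat.zero_le N)).ne'
  refine ⟨?_, hwsum, ?_, ?_⟩
  · have hterm : ∀ d ∈ Finset.Icc 1 N,
        ωtil d * ((cexp p Y (fun ω => D ω = d) - cexp p Y (fun ω => D ω = 0)) / d)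
          = (((d:ℝ) - μ) * S d) / Var - (((d:ℝ) - μ) * P d) / Var * (S 0 / P 0) := by
      intro d hd
      obtain ⟨h1d, hdN⟩ := Finset.mem_Icc.mp hd
      have hd0 : (d:ℝ) ≠ 0 := Nat.cast_ne_zero.mpr (by omega)
      have hPd : P d ≠ 0 := (hPpos d hdN).ne'
      rw [hcexp, hcexp, hωdef' d]
      field_simp
    rw [Finset.sum_congr rfl hterm, Finset.sum_sub_distrib, ← Finset.sum_mul,
      ← Finset.sum_div, ← Finset.sum_div, hIccS, hIccP, hα]
    field_simp
    ring
  · intro d hd hdμ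
    obtain ⟨h1d, hdN⟩ := Finset.mem_Icc.mp hd
    have hdpos : (0:ℝ) < d := by exact_mod_cast Nat.pos_of_ne_zero (by omega)
    rw [hωdef' d]
    exact div_neg_of_neg_of_pos
      (mul_neg_of_neg_of_pos (mul_neg_of_pos_of_neg hdpos (by linarith)) (hPpos d hdN)) hVar
  · intro d hd hdμ
    obtain ⟨h1d, hdN⟩ := Finset.mem_Icc.mp hd
    have hdpos : (0:ℝ) < d := by exact_mod_cast Nat.pos_of_ne_zero (by omega)
    rw [hωdef' d]
    exact div_pos (mul_pos (mul_pos hdpos (by linarith)) (hPpos d hdN)) hVar
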